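/- Let W be a group, χ an automorphism of W with χ ∘ χ = id, M a normal subgroup of W of finite index with χ(M) ≠ M such that the group M/(M ∩ χ(M)) is simple, and K a χ-invariant normal subgroup of finite index such that [M : M ∩ χ(M)] does not divide [W : K]. Then M ∩ K is not χ-invariant, and (M ∩ K)/((M ∩ K) ∩ χ(M ∩ K)) ≅ M/(M ∩ χ(M)). -/

import Mathlib

/-- If the chirality group `M/(M ∩ χ(M))` is simple, `χ(M) ≠ M`, `K` is χ-invariant, and
`[M : M ∩ χ(M)]` does not divide `[W : K]`, then `M ∩ K` is not χ-invariant and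
`(M ∩ K)/((M ∩ K) ∩ χ(M ∩ K)) ≅ M/(M ∩ χ(M))`. -/
theorem stmt_11 {W : Type*} [Group W] (χ : W ≃* W) (hχ : ∀ w, χ (χ w) = w)
    (M K : Subgroup W) [M.Normal] [K.Normal] [M.FiniteIndex] [K.FiniteIndex]
    (hM : M.map χ.toMonoidHom ≠ M) (hK : K.map χ.toMonoidHom = K)
    [((M.map χ.toMonoidHom).subgroupOf M).Normal]
    [(((M ⊓ K).map χ.toMonoidHom).subgroupOf (M ⊓ K)).Normal]
    (hsimple : IsSimpleGroup (↥M ⧸ (M.map χ.toMonoidHom).subgroupOf M))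
    (hdvd : ¬ (M.map χ.toMonoidHom).relIndex M ∣ K.index) :
    (M ⊓ K).map χ.toMonoidHom ≠ M ⊓ K ∧
      Nonempty ((↥(M ⊓ K) ⧸ ((M ⊓ K).map χ.toMonoidHom).subgroupOf (M ⊓ K)) ≃*
        (↥M ⧸ (M.map χ.toMonoidHom).subgroupOf M)) := by
  classical
  have hinj : Function.Injective (χ.toMonoidHom : W →* W) := χ.injective
  have hmap : (M ⊓ K).map χ.toMonoidHom = M.map χ.toMonoidHom ⊓ K := by
    rw [Subgroup.map_inf M K _ hinj, hK]
  have hnorm : ((M ⊓ K).subgroupOf M).Normal := Subgroup.normal_subgroupOf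
  have hPnorm : (Subgroup.map (QuotientGroup.mk' ((M.map χ.toMonoidHom).subgroupOf M))
      ((M ⊓ K).subgroupOf M)).Normal :=
    Subgroup.Normal.map hnorm _ (QuotientGroup.mk'_surjective _)
  rcases hsimple.eq_bot_or_eq_top_of_normal _ hPnorm with hbot | htop
  · -- contradiction with hdvd
    exfalso
    rw [Subgroup.map_eq_bot_iff, QuotientGroup.ker_mk'] at hbot
    have hle : K ⊓ M ≤ M.map χ.toMonoidHom := by
      intro x hx
      have hx' : (⟨x, hx.2⟩ : M) ∈ (M ⊓ K).subgroupOf M :=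
        Subgroup.mem_subgroupOf.mpr ⟨hx.2, hx.1⟩
      exact Subgroup.mem_subgroupOf.mp (hbot hx')
    apply hdvd
    have h1 : (M.map χ.toMonoidHom).relIndex M ∣ K.relIndex M := by
      rw [← Subgroup.inf_relIndex_right K M]
      exact Subgroup.relIndex_dvd_of_le_left M hle
    exact h1.trans (Subgroup.relIndex_dvd_index_of_normal K M)
  · set f : ↥(M ⊓ K) →* ↥M ⧸ (M.map χ.toMonoidHom).subgroupOf M :=
      (QuotientGroup.mk' _).comp (Subgroup.inclusion inf_le_left) with hf
    have hsurj : Function.Surjective f := by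
      rw [← MonoidHom.range_eq_top, hf, MonoidHom.range_comp, Subgroup.inclusion_range]
      exact htop
    have hker : f.ker = ((M ⊓ K).map χ.toMonoidHom).subgroupOf (M ⊓ K) := by
      ext x
      simp only [hf, MonoidHom.mem_ker, MonoidHom.comp_apply, QuotientGroup.mk'_apply,
        QuotientGroup.eq_one_iff, Subgroup.mem_subgroupOf, Subgroup.coe_inclusion,
        hmap, Subgroup.mem_inf]
      exact ⟨fun h => ⟨h, x.2.2⟩, fun h => h.1⟩
    constructor
    · intro heq
      have hkt : f.ker = ⊤ := by
        rw [hker, heq, Subgroup.subgroupOf_self]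
      have h1 : ∀ x : ↥(M ⊓ K), f x = 1 := fun x =>
        (MonoidHom.mem_ker).mp (hkt ▸ Subgroup.mem_top x)
      obtain ⟨a, b, hab⟩ := hsimple.exists_pair_ne
      obtain ⟨x, rfl⟩ := hsurj a
      obtain ⟨y, rfl⟩ := hsurj b
      exact hab ((h1 x).trans (h1 y).symm)
    · exact ⟨(QuotientGroup.quotientMulEquivOfEq hker.symm).trans
        (QuotientGroup.quotientKerEquivOfSurjective f hsurj)⟩
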